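/- Let U be a finite poset and p = min {p' : U order-embeds into P([p'])}. Then for all n ≥ p, the maximum number Sp(U,n) of pairwise unrelated copies of U in the powerset lattice P([n]) satisfies Sp(U,n) ≥ C(n−p, ⌊(n−p)/2⌋). -/

import Mathlib

/-- Lower estimate for the Sperner number: if `p = min {p' : U ↪o P([p'])}`,
then for `n ≥ p`, `Sp(U,n) ≥ C(n-p, ⌊(n-p)/2⌋)`, where `Sp(U,n)` is the largest
`k` such that the cardinal sum of `k` copies of `U` embeds into `P([n])`. -/
theorem stmt_11 (U : Type*) [PartialOrder U] [Fintype U] [Nonempty U]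
    (p : ℕ) (hp : p = sInf {p' : ℕ | Nonempty (U ↪o Set (Fin p'))})
    (n : ℕ) (hn : p ≤ n) :
    (n - p).choose ((n - p) / 2)
      ≤ sSup {k : ℕ | Nonempty ((Σ _ : Fin k, U) ↪o Set (Fin n))} := by
  classical
  have hne : ({p' : ℕ | Nonempty (U ↪o Set (Fin p'))}).Nonempty := by
    refine ⟨Fintype.card U, ⟨OrderEmbedding.ofMapLEIff
      (fun u => {x : Fin (Fintype.card U) | (Fintype.equivFin U).symm x ≤ u}) ?_⟩⟩
    intro a b
    constructor
    · intro h
      have := h (show Fintype.equivFin U a ∈ _ by simp)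
      simpa using this
    · intro h x hx
      exact le_trans hx h
  have hpmem : Nonempty (U ↪o Set (Fin p)) := by
    have := Nat.sInf_mem hne
    rw [← hp] at this
    exact this
  obtain ⟨e⟩ := hpmem
  set m := n - p with hm
  set k := m.choose (m / 2) with hk
  have hcard : Fintype.card {s : Finset (Fin m) // s.card = m / 2} = k := by
    rw [hk]
    set_option linter.unnecessarySimpa false in
    simpa using Fintype.card_finset_len (α := Fin m) (m / 2)
  let c : Fin k ≃ {s : Finset (Fin m) // s.card = m / 2} :=
    (Fintype.equivFinOfCardEq hcard).symm
  have key : ∀ (A B : Set (Fin p)) (C D : Set (Fin m)),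
      (Sum.inl '' A ∪ Sum.inr '' C ⊆ Sum.inl '' B ∪ Sum.inr '' D) ↔ (A ⊆ B ∧ C ⊆ D) := by
    intro A B C D
    constructor
    · intro h
      constructor
      · intro a ha
        rcases h (Or.inl ⟨a, ha, rfl⟩) with ⟨b, hb, hba⟩ | ⟨d, _, hda⟩
        · rwa [← Sum.inl_injective hba]
        · exact absurd hda (by simp)
      · intro a ha
        rcases h (Or.inr ⟨a, ha, rfl⟩) with ⟨b, _, hba⟩ | ⟨d, hd, hda⟩
        · exact absurd hba (by simp)
        · rwa [← Sum.inr_injective hda]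
    · rintro ⟨h1, h2⟩
      exact Set.union_subset_union (Set.image_mono h1) (Set.image_mono h2)
  let g : (Σ _ : Fin k, U) → Set (Fin p ⊕ Fin m) :=
    fun x => Sum.inl '' (e x.2) ∪ Sum.inr '' ((c x.1 : Finset (Fin m)) : Set (Fin m))
  have hg : ∀ a b, g a ≤ g b ↔ a ≤ b := by
    rintro ⟨i, u⟩ ⟨j, v⟩
    rw [Sigma.le_def]
    constructor
    · intro h
      rw [show (g ⟨i, u⟩ ≤ g ⟨j, v⟩) ↔ _ from key _ _ _ _] at h
      obtain ⟨h1, h2⟩ := h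
      have hij : i = j := by
        have hsub : (c i : Finset (Fin m)) ⊆ (c j : Finset (Fin m)) :=
          Finset.coe_subset.mp h2
        have := Finset.eq_of_subset_of_card_le hsub (by rw [(c j).2, (c i).2])
        exact c.injective (Subtype.ext this)
      subst hij
      exact ⟨rfl, e.le_iff_le.mp h1⟩
    · rintro ⟨h, huv⟩
      obtain rfl : i = j := h
      exact (key _ _ _ _).mpr ⟨e.monotone huv, subset_rfl⟩
  have hnp : p + m = n := Nat.add_sub_cancel' hn
  let eqv : (Fin p ⊕ Fin m) ≃ Fin n := finSumFinEquiv.trans (finCongr hnp)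
  let g' : (Σ _ : Fin k, U) → Set (Fin n) := fun x => eqv '' (g x)
  have hg' : ∀ a b, g' a ≤ g' b ↔ a ≤ b := fun a b => by
    rw [show (g' a ≤ g' b) ↔ g a ⊆ g b from Set.image_subset_image_iff eqv.injective]
    exact hg a b
  have hmem : k ∈ {k : ℕ | Nonempty ((Σ _ : Fin k, U) ↪o Set (Fin n))} :=
    ⟨OrderEmbedding.ofMapLEIff g' hg'⟩
  have hbdd : BddAbove {k : ℕ | Nonempty ((Σ _ : Fin k, U) ↪o Set (Fin n))} := by
    refine ⟨2 ^ n, fun j hj => ?_⟩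
    obtain ⟨f⟩ := hj
    have hinj : Function.Injective (fun i : Fin j => f ⟨i, Classical.arbitrary U⟩) := by
      intro a b hab
      have := f.injective hab
      exact (Sigma.mk.inj_iff.mp this).1
    calc j = Fintype.card (Fin j) := (Fintype.card_fin j).symm
      _ ≤ Fintype.card (Set (Fin n)) := Fintype.card_le_of_injective _ hinj
      _ = 2 ^ n := by simp
  exact le_csSup hbdd hmem
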